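/- Let H be a finite cyclic group of order m generated by h, let k ∈ ℤ, and consider the abelian group A = H ∪ H' of order 2m with multiplication x*y = xy, x'*y = x*y' = (xy)', x'*y' = xy·h^k (primes denoting the second copy). Embed A into PG(2,K) by α₁(x) = f₁(x), α₁(x') = f₂(x⁻¹); α₂(y) = f₁(yξ), α₂(y') = f₂(y⁻¹ξ⁻¹); α₃(z) = f₁(z⁻¹ξ^{3k−1}), α₃(z') = f₂(zξ), where H is realized as ⟨ξ³⟩ inside K* with ξ a primitive 3m-th root of unity, f₁(u) = (u,−1,0), f₂(u) = (u,u⁻¹,1). Then for all a, b ∈ A, the points α₁(a), α₂(b), α₃(a*b) are collinear. -/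

import Mathlib

section Aux
variable {K : Type*} [Field K]

private lemma detL1 (u v w : Kˣ) :
    Matrix.det (Matrix.of ![![(u:K), -1, 0], ![(v:K), -1, 0], ![(w:K), -1, 0]]) = 0 := by
  simp [Matrix.det_fin_three, Matrix.vecHead, Matrix.vecTail]

private lemma detL2 (x y : Kˣ) :
    Matrix.det (Matrix.of ![![(x:K), ((x⁻¹:Kˣ):K), 1], ![(y:K), ((y⁻¹:Kˣ):K), 1],
      ![((x*y:Kˣ):K), -1, 0]]) = 0 := by
  simp [Matrix.det_fin_three, Matrix.vecHead, Matrix.vecTail, Units.val_inv_eq_inv_val]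
  field_simp
  ring

private lemma detL3 (x y : Kˣ) :
    Matrix.det (Matrix.of ![![(x:K), ((x⁻¹:Kˣ):K), 1], ![((x*y:Kˣ):K), -1, 0],
      ![(y:K), ((y⁻¹:Kˣ):K), 1]]) = 0 := by
  simp [Matrix.det_fin_three, Matrix.vecHead, Matrix.vecTail, Units.val_inv_eq_inv_val]
  ring

private lemma detL4 (x y : Kˣ) :
    Matrix.det (Matrix.of ![![((x*y:Kˣ):K), -1, 0], ![(x:K), ((x⁻¹:Kˣ):K), 1],
      ![(y:K), ((y⁻¹:Kˣ):K), 1]]) = 0 := by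
  simp [Matrix.det_fin_three, Matrix.vecHead, Matrix.vecTail, Units.val_inv_eq_inv_val]
  field_simp
  ring

end Aux

/-- The conic-line type light dual multinet of order `2m`: with `ξ` a primitive `3m`-th
root of unity, `H = ⟨ξ³⟩` (elements `ξ^{3j}`), `A = H ∪ H'` encoded as `ℤ × Bool` with
`(j,s)*(j',t) = (j + j' + [s ∧ t]·k, s xor t)` (so `x'*y' = xy·ξ^{3k}`), `f₁(u) = (u,-1,0)`
on the line and `f₂(u) = (u,u⁻¹,1)` on the conic, and the embeddings
`α₁(x) = f₁(x)`, `α₁(x') = f₂(x⁻¹)`; `α₂(y) = f₁(yξ)`, `α₂(y') = f₂(y⁻¹ξ⁻¹)`;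
`α₃(z) = f₁(z⁻¹ξ^{3k-1})`, `α₃(z') = f₂(zξ)`, the points `α₁(a), α₂(b), α₃(a*b)` are
collinear for all `a, b ∈ A`. -/
theorem conic_line_light_dual_multinet {K : Type*} [Field K] (m : ℕ) (hm : 0 < m)
    (ξ : Kˣ) (hξ : orderOf ξ = 3 * m) (k : ℤ) :
    let f₁ : Kˣ → Fin 3 → K := fun u => ![(u : K), -1, 0]
    let f₂ : Kˣ → Fin 3 → K := fun u => ![(u : K), ((u⁻¹ : Kˣ) : K), 1]
    let α₁ : ℤ × Bool → Fin 3 → K := fun a =>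
      if a.2 then f₂ (ξ ^ (-3 * a.1)) else f₁ (ξ ^ (3 * a.1))
    let α₂ : ℤ × Bool → Fin 3 → K := fun a =>
      if a.2 then f₂ (ξ ^ (-3 * a.1 - 1)) else f₁ (ξ ^ (3 * a.1 + 1))
    let α₃ : ℤ × Bool → Fin 3 → K := fun a =>
      if a.2 then f₂ (ξ ^ (3 * a.1 + 1)) else f₁ (ξ ^ (-3 * a.1 + 3 * k - 1))
    let mul : ℤ × Bool → ℤ × Bool → ℤ × Bool :=
      fun a b => (a.1 + b.1 + if a.2 && b.2 then k else 0, xor a.2 b.2)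
    ∀ a b : ℤ × Bool, Matrix.det (Matrix.of ![α₁ a, α₂ b, α₃ (mul a b)]) = 0 := by
  intro f₁ f₂ α₁ α₂ α₃ mul a b
  obtain ⟨i, s⟩ := a
  obtain ⟨j, t⟩ := b
  cases s <;> cases t <;>
    simp only [α₁, α₂, α₃, mul, f₁, f₂, Bool.and_self, Bool.and_false, Bool.and_true,
      Bool.false_and, Bool.xor_self, Bool.xor_false, Bool.false_xor, Bool.true_xor,
      Bool.not_true, Bool.not_false, if_true, if_false, Bool.false_eq_true, Bool.and_eq_true,
      ite_true, ite_false, cond_true, cond_false, and_true, and_false, true_and, false_and,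
      and_self, add_zero]
  · exact detL1 _ _ _
  · rw [show ξ ^ (3 * i) = ξ ^ (-3 * j - 1) * ξ ^ (3 * (i + j) + 1) by
      rw [← zpow_add]; congr 1; ring]
    exact detL4 _ _
  · rw [show ξ ^ (3 * j + 1) = ξ ^ (-3 * i) * ξ ^ (3 * (i + j) + 1) by
      rw [← zpow_add]; congr 1; ring]
    exact detL3 _ _
  · rw [show ξ ^ (-3 * (i + j + k) + 3 * k - 1) = ξ ^ (-3 * i) * ξ ^ (-3 * j - 1) by
      rw [← zpow_add]; congr 1; ring]
    exact detL2 _ _
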